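/- Let M = (M_0, M_1, M_2, …) be an increasing sequence of positive real numbers with M_0 = 1 that is logarithmically convex, satisfies lim_{j→∞} (M_j)^{1/j} = ∞, and satisfies sup_{j≥1} (M_{j+1}/M_j)^{1/j} < ∞. Then C^ℝ_M(U) is closed under reciprocal: if U ⊆ ℝ^N is open and f ∈ C^ℝ_M(U) satisfies f(x) ≠ 0 for all x ∈ U, then 1/f ∈ C^ℝ_M(U). -/

import Mathlib

/-- The `i`-th partial derivative of a function on Euclidean space. -/
noncomputable def pd {ι : Type} [Fintype ι] [DecidableEq ι] {W : Type} [NormedAddCommGroup W]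
    [NormedSpace ℝ W] (i : ι) (f : EuclideanSpace ℝ ι → W) : EuclideanSpace ℝ ι → W :=
  fun x => fderiv ℝ f x (EuclideanSpace.single i 1)

/-- The multi-index derivative `D^α f`. -/
noncomputable def mderiv {ι : Type} [Fintype ι] [DecidableEq ι] {W : Type} [NormedAddCommGroup W]
    [NormedSpace ℝ W] (α : ι → ℕ) (f : EuclideanSpace ℝ ι → W) : EuclideanSpace ℝ ι → W :=
  (Finset.univ : Finset ι).toList.foldr (fun i g => (pd i)^[α i] g) f

/-- Membership in the real Denjoy-Carleman class `C^ℝ_M(U)`: `f` is `C^∞` on `U` and on every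
compact `K ⊆ U` there are `A, B > 0` with `|(1/α!) D^α f(x)| ≤ A B^{|α|} M_{|α|}`. -/
def CRM {ι : Type} [Fintype ι] [DecidableEq ι] (M : ℕ → ℝ)
    (U : Set (EuclideanSpace ℝ ι)) (f : EuclideanSpace ℝ ι → ℝ) : Prop :=
  ContDiffOn ℝ (⊤ : ℕ∞) f U ∧
  ∀ K : Set (EuclideanSpace ℝ ι), K ⊆ U → IsCompact K →
    ∃ A B : ℝ, 0 < A ∧ 0 < B ∧ ∀ x ∈ K, ∀ α : ι → ℕ,
      (1 / (∏ i, ((α i).factorial : ℝ))) * |mderiv α f x| ≤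
        A * B ^ (∑ i, α i) * M (∑ i, α i)

namespace Stmt9Aux

variable {N : ℕ} {U : Set (EuclideanSpace ℝ (Fin N))}

abbrev EE (N : ℕ) := EuclideanSpace ℝ (Fin N)

theorem pd_congr (hU : IsOpen U) {u v : EE N → ℝ}
    (h : ∀ y ∈ U, u y = v y) {x : EE N} (hx : x ∈ U) (i : Fin N) :
    pd i u x = pd i v x := by
  have hev : u =ᶠ[nhds x] v := Filter.eventuallyEq_of_mem (hU.mem_nhds hx) h
  simp only [pd, hev.fderiv_eq]

theorem pdIter_congr (hU : IsOpen U) {u v : EE N → ℝ}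
    (h : ∀ y ∈ U, u y = v y) (i : Fin N) (k : ℕ) :
    ∀ x ∈ U, (pd i)^[k] u x = (pd i)^[k] v x := by
  induction k with
  | zero => exact h
  | succ k ih =>
    intro x hx
    rw [Function.iterate_succ_apply', Function.iterate_succ_apply']
    exact pd_congr hU ih hx i

theorem smooth_diffAt (hU : IsOpen U) {u : EE N → ℝ} (hu : ContDiffOn ℝ (⊤ : ℕ∞) u U)
    {x : EE N} (hx : x ∈ U) : DifferentiableAt ℝ u x :=
  (hu.contDiffAt (hU.mem_nhds hx)).differentiableAt (by simp)

theorem pd_smooth (hU : IsOpen U) {u : EE N → ℝ} (hu : ContDiffOn ℝ (⊤ : ℕ∞) u U) (i : Fin N) :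
    ContDiffOn ℝ (⊤ : ℕ∞) (pd i u) U := by
  have h1 : ContDiffOn ℝ (⊤ : ℕ∞) (fderiv ℝ u) U :=
    hu.fderiv_of_isOpen hU (by simp)
  exact h1.clm_apply contDiffOn_const

theorem pdIter_smooth (hU : IsOpen U) {u : EE N → ℝ} (hu : ContDiffOn ℝ (⊤ : ℕ∞) u U)
    (i : Fin N) (k : ℕ) : ContDiffOn ℝ (⊤ : ℕ∞) ((pd i)^[k] u) U := by
  induction k with
  | zero => exact hu
  | succ k ih => rw [Function.iterate_succ']; exact pd_smooth hU ih i

theorem pd_mul_apply {u v : EE N → ℝ} {x : EE N} (hu : DifferentiableAt ℝ u x)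
    (hv : DifferentiableAt ℝ v x) (i : Fin N) :
    pd i (fun y => u y * v y) x = pd i u x * v x + u x * pd i v x := by
  simp only [pd, fderiv_fun_mul hu hv, ContinuousLinearMap.add_apply,
    ContinuousLinearMap.smul_apply, smul_eq_mul]
  ring

theorem pd_sum_apply {β : Type*} {s : Finset β} {w : β → EE N → ℝ} {x : EE N}
    (h : ∀ b ∈ s, DifferentiableAt ℝ (w b) x) (i : Fin N) :
    pd i (fun y => ∑ b ∈ s, w b y) x = ∑ b ∈ s, pd i (w b) x := by
  simp only [pd, fderiv_fun_sum h, ContinuousLinearMap.sum_apply]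

theorem pd_const_mul_apply {w : EE N → ℝ} {x : EE N} (h : DifferentiableAt ℝ w x)
    (c : ℝ) (i : Fin N) :
    pd i (fun y => c * w y) x = c * pd i w x := by
  simp only [pd, fderiv_const_mul h, ContinuousLinearMap.smul_apply, smul_eq_mul]

theorem pd_const (c : ℝ) (i : Fin N) : pd i (fun _ : EE N => c) = fun _ => 0 := by
  funext x
  simp [pd]

theorem pdIter_const_zero (i : Fin N) (k : ℕ) :
    (pd i)^[k] (fun _ : EE N => (0 : ℝ)) = fun _ => 0 := by
  induction k with
  | zero => rfl
  | succ k ih => rw [Function.iterate_succ_apply, pd_const, ih]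

theorem pdIter_const (c : ℝ) (i : Fin N) {k : ℕ} (hk : k ≠ 0) :
    (pd i)^[k] (fun _ : EE N => c) = fun _ => 0 := by
  obtain ⟨k, rfl⟩ := Nat.exists_eq_succ_of_ne_zero hk
  rw [Function.iterate_succ_apply, pd_const, pdIter_const_zero]

theorem pdIter_sum (hU : IsOpen U) {β : Type} {s : Finset β} {w : β → EE N → ℝ}
    (hw : ∀ b ∈ s, ContDiffOn ℝ (⊤ : ℕ∞) (w b) U) (i : Fin N) (k : ℕ) :
    ∀ x ∈ U, (pd i)^[k] (fun y => ∑ b ∈ s, w b y) x = ∑ b ∈ s, (pd i)^[k] (w b) x := by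
  induction k with
  | zero => intro x _; rfl
  | succ k ih =>
    intro x hx
    rw [Function.iterate_succ_apply']
    have h1 : pd i ((pd i)^[k] fun y => ∑ b ∈ s, w b y) x
        = pd i (fun y => ∑ b ∈ s, (pd i)^[k] (w b) y) x := pd_congr hU ih hx i
    rw [h1, pd_sum_apply (fun b hb => smooth_diffAt hU (pdIter_smooth hU (hw b hb) i k) hx) i]
    exact Finset.sum_congr rfl fun b _ => by rw [Function.iterate_succ_apply']

theorem pdIter_const_mul (hU : IsOpen U) {w : EE N → ℝ}
    (hw : ContDiffOn ℝ (⊤ : ℕ∞) w U) (c : ℝ) (i : Fin N) (k : ℕ) :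
    ∀ x ∈ U, (pd i)^[k] (fun y => c * w y) x = c * (pd i)^[k] w x := by
  induction k with
  | zero => intro x _; rfl
  | succ k ih =>
    intro x hx
    rw [Function.iterate_succ_apply']
    have h1 : pd i ((pd i)^[k] fun y => c * w y) x
        = pd i (fun y => c * (pd i)^[k] w y) x := pd_congr hU ih hx i
    rw [h1, pd_const_mul_apply (smooth_diffAt hU (pdIter_smooth hU hw i k) hx) c i,
      Function.iterate_succ_apply']

theorem pdIter_mul (hU : IsOpen U) {u v : EE N → ℝ} (hu : ContDiffOn ℝ (⊤ : ℕ∞) u U)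
    (hv : ContDiffOn ℝ (⊤ : ℕ∞) v U) (i : Fin N) (k : ℕ) :
    ∀ x ∈ U, (pd i)^[k] (fun y => u y * v y) x
      = ∑ j ∈ Finset.range (k + 1),
          (k.choose j : ℝ) * ((pd i)^[j] u x * (pd i)^[k - j] v x) := by
  induction k with
  | zero => intro x _; simp
  | succ k ih =>
    intro x hx
    rw [Function.iterate_succ_apply']
    have h1 : pd i ((pd i)^[k] fun y => u y * v y) x
        = pd i (fun y => ∑ j ∈ Finset.range (k + 1),
            (k.choose j : ℝ) * ((pd i)^[j] u y * (pd i)^[k - j] v y)) x :=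
      pd_congr hU ih hx i
    have hdiff : ∀ j ∈ Finset.range (k + 1), DifferentiableAt ℝ
        (fun y => (k.choose j : ℝ) * ((pd i)^[j] u y * (pd i)^[k - j] v y)) x := by
      intro j _
      exact (((smooth_diffAt hU (pdIter_smooth hU hu i j) hx).mul
        (smooth_diffAt hU (pdIter_smooth hU hv i (k - j)) hx)).const_mul _)
    rw [h1, pd_sum_apply hdiff i]
    have h2 : ∀ j ∈ Finset.range (k + 1),
        pd i (fun y => (k.choose j : ℝ) * ((pd i)^[j] u y * (pd i)^[k - j] v y)) x
        = (k.choose j : ℝ) * ((pd i)^[j + 1] u x * (pd i)^[k - j] v x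
            + (pd i)^[j] u x * (pd i)^[k - j + 1] v x) := by
      intro j _
      have du := smooth_diffAt hU (pdIter_smooth hU hu i j) hx
      have dv := smooth_diffAt hU (pdIter_smooth hU hv i (k - j)) hx
      rw [pd_const_mul_apply (w := fun y => (pd i)^[j] u y * (pd i)^[k - j] v y) (du.mul dv) _ i, pd_mul_apply du dv i,
        Function.iterate_succ_apply', Function.iterate_succ_apply']
    rw [Finset.sum_congr rfl h2]
    -- now Pascal
    have key : ∀ (a b : ℕ → ℝ),
        ∑ j ∈ Finset.range (k + 1), (k.choose j : ℝ) * (a (j+1) * b (k-j) + a j * b (k-j+1))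
        = ∑ j ∈ Finset.range (k + 2), ((k+1).choose j : ℝ) * (a j * b (k+1-j)) := by
      intro a b
      have hsplit : ∑ j ∈ Finset.range (k + 1),
          (k.choose j : ℝ) * (a (j+1) * b (k-j) + a j * b (k-j+1))
          = (∑ j ∈ Finset.range (k + 1), (k.choose j : ℝ) * (a (j+1) * b (k-j)))
            + ∑ j ∈ Finset.range (k + 1), (k.choose j : ℝ) * (a j * b (k+1-j)) := by
        rw [← Finset.sum_add_distrib]
        refine Finset.sum_congr rfl fun j hj => ?_
        have : k - j + 1 = k + 1 - j := by
          have := Finset.mem_range.1 hj; omega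
        rw [this]; ring
      have e2 := Finset.sum_range_succ' (fun j => ((k+1).choose j : ℝ) * (a j * b (k+1-j))) (k+1)
      have e5 := Finset.sum_range_succ' (fun j => (k.choose j : ℝ) * (a j * b (k+1-j))) (k+1)
      have e6 := Finset.sum_range_succ (fun j => (k.choose j : ℝ) * (a j * b (k+1-j))) (k+1)
      simp only [Nat.choose_succ_self, Nat.cast_zero, zero_mul, add_zero] at e6
      have e3 : ∑ j ∈ Finset.range (k + 1), ((k+1).choose (j+1) : ℝ) * (a (j+1) * b (k+1-(j+1)))
          = (∑ j ∈ Finset.range (k + 1), (k.choose j : ℝ) * (a (j+1) * b (k-j)))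
            + ∑ j ∈ Finset.range (k + 1), (k.choose (j+1) : ℝ) * (a (j+1) * b (k+1-(j+1))) := by
        rw [← Finset.sum_add_distrib]
        refine Finset.sum_congr rfl fun j hj => ?_
        have h1 : k + 1 - (j + 1) = k - j := by omega
        have h2 : (((k+1).choose (j+1) : ℕ) : ℝ) = (k.choose j : ℝ) + (k.choose (j+1) : ℝ) := by
          rw [Nat.choose_succ_succ]; push_cast; ring
        rw [h1, h2]; ring
      simp only [Nat.choose_zero_right, Nat.cast_one, one_mul, Nat.sub_zero] at e2 e5
      linarith [hsplit, e2, e5, e6, e3]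
    exact key (fun j => (pd i)^[j] u x) (fun m => (pd i)^[m] v x)

noncomputable def FD (L : List (Fin N)) (α : Fin N → ℕ) (u : EE N → ℝ) : EE N → ℝ :=
  L.foldr (fun i g => (pd i)^[α i] g) u

theorem FD_nil (α : Fin N → ℕ) (u : EE N → ℝ) : FD [] α u = u := rfl

theorem FD_cons (i : Fin N) (L : List (Fin N)) (α : Fin N → ℕ) (u : EE N → ℝ) :
    FD (i :: L) α u = (pd i)^[α i] (FD L α u) := rfl

theorem FD_smooth (hU : IsOpen U) {u : EE N → ℝ} (hu : ContDiffOn ℝ (⊤ : ℕ∞) u U)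
    (L : List (Fin N)) (α : Fin N → ℕ) : ContDiffOn ℝ (⊤ : ℕ∞) (FD L α u) U := by
  induction L with
  | nil => exact hu
  | cons i L ih => exact pdIter_smooth hU ih i (α i)

theorem FD_congr (hU : IsOpen U) {u v : EE N → ℝ} (h : ∀ y ∈ U, u y = v y)
    (L : List (Fin N)) (α : Fin N → ℕ) : ∀ x ∈ U, FD L α u x = FD L α v x := by
  induction L with
  | nil => exact h
  | cons i L ih => exact pdIter_congr hU ih i (α i)

theorem FD_index_congr {u : EE N → ℝ} {α β : Fin N → ℕ} (L : List (Fin N))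
    (h : ∀ i ∈ L, α i = β i) : FD L α u = FD L β u := by
  induction L with
  | nil => rfl
  | cons i L ih =>
    rw [FD_cons, FD_cons, h i (List.mem_cons_self),
      ih fun j hj => h j (List.mem_cons_of_mem i hj)]

theorem FD_allzero {u : EE N → ℝ} {α : Fin N → ℕ} (L : List (Fin N))
    (h : ∀ i ∈ L, α i = 0) : FD L α u = u := by
  induction L with
  | nil => rfl
  | cons i L ih =>
    rw [FD_cons, h i (List.mem_cons_self)]
    exact ih fun j hj => h j (List.mem_cons_of_mem i hj)

theorem FD_const_of_exists {α : Fin N → ℕ} {L : List (Fin N)}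
    (h : ∃ i ∈ L, α i ≠ 0) (c : ℝ) : FD L α (fun _ : EE N => c) = fun _ => 0 := by
  induction L with
  | nil => simp at h
  | cons i L ih =>
    by_cases h' : ∃ j ∈ L, α j ≠ 0
    · rw [FD_cons, ih h', pdIter_const_zero]
    · push_neg at h'
      have hi : α i ≠ 0 := by
        obtain ⟨j, hj, hja⟩ := h
        rcases List.mem_cons.1 hj with rfl | hjL
        · exact hja
        · exact absurd (h' j hjL) hja
      rw [FD_cons, FD_allzero L h', pdIter_const c i hi]

theorem sum_piFinset_split (i : Fin N) (α : Fin N → ℕ) (g : (Fin N → ℕ) → ℝ) :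
    ∑ β ∈ Fintype.piFinset (fun j => Finset.range (α j + 1)), g β
    = ∑ j ∈ Finset.range (α i + 1),
        ∑ β ∈ Fintype.piFinset (fun j' => Finset.range (Function.update α i 0 j' + 1)),
          g (Function.update β i j) := by
  refine Eq.trans ?_ (Finset.sum_product' (β := ℝ) (Finset.range (α i + 1))
    (Fintype.piFinset (fun j' => Finset.range (Function.update α i 0 j' + 1)))
    (fun (j : ℕ) (β : Fin N → ℕ) => g (Function.update β i j)))
  refine Finset.sum_nbij' (fun β => (β i, Function.update β i 0))
    (fun p => Function.update p.2 i p.1) ?_ ?_ ?_ ?_ ?_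
  · intro β hβ
    rw [Fintype.mem_piFinset] at hβ
    rw [Finset.mem_product]
    refine ⟨hβ i, ?_⟩
    rw [Fintype.mem_piFinset]
    intro j'
    show Function.update β i 0 j' ∈ Finset.range (Function.update α i 0 j' + 1)
    rcases eq_or_ne j' i with rfl | hj
    · simp
    · rw [Function.update_of_ne hj, Function.update_of_ne hj]
      exact hβ j'
  · intro p hp
    rw [Finset.mem_product] at hp
    rw [Fintype.mem_piFinset]
    intro j'
    rcases eq_or_ne j' i with rfl | hj
    · rw [Function.update_self]; exact hp.1
    · rw [Function.update_of_ne hj]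
      have := Fintype.mem_piFinset.1 hp.2 j'
      rwa [Function.update_of_ne hj] at this
  · intro β _
    dsimp only
    rw [Function.update_idem]
    exact Function.update_eq_self i β
  · intro p hp
    rw [Finset.mem_product] at hp
    have h2 := Fintype.mem_piFinset.1 hp.2 i
    rw [Function.update_self, Finset.mem_range, Nat.lt_one_iff] at h2
    have e2 : Function.update (Function.update p.2 i p.1) i 0 = p.2 := by
      rw [Function.update_idem, ← h2]
      exact Function.update_eq_self i p.2
    rw [Prod.ext_iff]
    exact ⟨Function.update_self i p.1 p.2, e2⟩
  · intro β _
    dsimp only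
    rw [Function.update_idem, Function.update_eq_self]

theorem FD_mul (hU : IsOpen U) {u v : EE N → ℝ} (hu : ContDiffOn ℝ (⊤ : ℕ∞) u U)
    (hv : ContDiffOn ℝ (⊤ : ℕ∞) v U) :
    ∀ (L : List (Fin N)), L.Nodup → ∀ (α : Fin N → ℕ), (∀ i ∉ L, α i = 0) →
    ∀ x ∈ U, FD L α (fun y => u y * v y) x =
      ∑ β ∈ Fintype.piFinset (fun j => Finset.range (α j + 1)),
        (∏ j, ((α j).choose (β j) : ℝ)) *
          (FD L β u x * FD L (fun j => α j - β j) v x) := by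
  intro L
  induction L with
  | nil =>
    intro _ α hα x hx
    have hα' : ∀ i, α i = 0 := fun i => hα i List.not_mem_nil
    have hsingle : Fintype.piFinset (fun j => Finset.range (α j + 1))
        = {fun _ => 0} := by
      ext β
      simp only [Fintype.mem_piFinset, Finset.mem_range, Finset.mem_singleton, funext_iff]
      constructor
      · intro h j; have := h j; rw [hα' j] at this; omega
      · intro h j; rw [h j, hα' j]; omega
    rw [hsingle, Finset.sum_singleton]
    simp [FD_nil]
  | cons i L' ih =>
    intro hnd α hα x hx
    have hi : i ∉ L' := (List.nodup_cons.1 hnd).1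
    have hnd' : L'.Nodup := (List.nodup_cons.1 hnd).2
    set k := α i with hk
    set α₀ := Function.update α i 0 with hα₀def
    have hα₀ : ∀ j ∉ L', α₀ j = 0 := by
      intro j hj
      rcases eq_or_ne j i with rfl | hne
      · exact Function.update_self _ _ _
      · rw [hα₀def, Function.update_of_ne hne]
        exact hα j (by simp [hne, hj])
    have hα₀L : ∀ j ∈ L', α₀ j = α j := by
      intro j hj
      rw [hα₀def, Function.update_of_ne (fun h => hi (by rw [← h]; exact hj))]
    -- rewrite the head fold
    rw [FD_cons]
    have hswap : FD L' α (fun y => u y * v y) = FD L' α₀ (fun y => u y * v y) :=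
      FD_index_congr L' (fun j hj => (hα₀L j hj).symm)
    rw [hswap]
    -- apply the IH and push the iterate through
    have hIH := ih hnd' α₀ hα₀
    -- summand functions are smooth
    have hsummand : ∀ β ∈ Fintype.piFinset (fun j => Finset.range (α₀ j + 1)),
        ContDiffOn ℝ (⊤ : ℕ∞)
          (fun y => (∏ j, ((α₀ j).choose (β j) : ℝ)) *
            (FD L' β u y * FD L' (fun j => α₀ j - β j) v y)) U := by
      intro β _
      exact contDiffOn_const.mul ((FD_smooth hU hu L' β).mul (FD_smooth hU hv L' _))
    have step1 : (pd i)^[k] (FD L' α₀ fun y => u y * v y) x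
        = (pd i)^[k] (fun y => ∑ β ∈ Fintype.piFinset (fun j => Finset.range (α₀ j + 1)),
            (∏ j, ((α₀ j).choose (β j) : ℝ)) *
              (FD L' β u y * FD L' (fun j => α₀ j - β j) v y)) x :=
      pdIter_congr hU hIH i k x hx
    rw [step1, pdIter_sum hU hsummand i k x hx]
    -- push iterate into each summand
    have step2 : ∀ β ∈ Fintype.piFinset (fun j => Finset.range (α₀ j + 1)),
        (pd i)^[k] (fun y => (∏ j, ((α₀ j).choose (β j) : ℝ)) *
            (FD L' β u y * FD L' (fun j => α₀ j - β j) v y)) x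
        = (∏ j, ((α₀ j).choose (β j) : ℝ)) *
            ∑ m ∈ Finset.range (k + 1), (k.choose m : ℝ) *
              ((pd i)^[m] (FD L' β u) x * (pd i)^[k - m] (FD L' (fun j => α₀ j - β j) v) x) := by
      intro β _
      rw [pdIter_const_mul hU ((FD_smooth hU hu L' β).mul (FD_smooth hU hv L' _)) _ i k x hx,
        pdIter_mul hU (FD_smooth hU hu L' β) (FD_smooth hU hv L' _) i k x hx]
    rw [Finset.sum_congr rfl step2]
    -- reindex the double sum
    rw [sum_piFinset_split i α
      (fun β' => (∏ j, ((α j).choose (β' j) : ℝ)) *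
        (FD (i :: L') β' u x * FD (i :: L') (fun j => α j - β' j) v x)),
      Finset.sum_comm]
    refine Finset.sum_congr rfl fun β hβ => ?_
    rw [Finset.mul_sum]
    refine Finset.sum_congr rfl fun m hm => ?_
    have hβi : β i = 0 := by
      have := Fintype.mem_piFinset.1 hβ i
      rw [Function.update_self] at this
      simpa using this
    -- identify the pieces
    have hneL : ∀ j ∈ L', j ≠ i := fun j hj h => hi (h ▸ hj)
    have hu' : (pd i)^[m] (FD L' β u) x = FD (i :: L') (Function.update β i m) u x := by
      rw [FD_cons, Function.update_self,
        FD_index_congr (u := u) L' (fun j hj =>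
          (Function.update_of_ne (hneL j hj) m β).symm)]
    have e2 : FD L' (fun j => α j - Function.update β i m j) v
        = FD L' (fun j => α₀ j - β j) v :=
      FD_index_congr L' (fun j hj => by
        rw [Function.update_of_ne (hneL j hj), hα₀L j hj])
    have hv' : (pd i)^[k - m] (FD L' (fun j => α₀ j - β j) v) x
        = FD (i :: L') (fun j => α j - Function.update β i m j) v x := by
      rw [FD_cons]
      simp only [Function.update_self]
      rw [← hk, e2]
    have hc : (∏ j, ((α j).choose (Function.update β i m j) : ℝ))
        = (k.choose m : ℝ) * ∏ j, ((α₀ j).choose (β j) : ℝ) := by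
      have e1 : (fun j => ((α j).choose (Function.update β i m j) : ℝ))
          = Function.update (fun j => ((α₀ j).choose (β j) : ℝ)) i (k.choose m : ℝ) := by
        funext j
        rcases eq_or_ne j i with rfl | hj
        · rw [Function.update_self, Function.update_self, hk]
        · rw [Function.update_of_ne hj, Function.update_of_ne hj, hα₀def,
            Function.update_of_ne hj]
      rw [e1, Finset.prod_update_of_mem (Finset.mem_univ i)]
      have e3 : ∏ j, ((α₀ j).choose (β j) : ℝ)
          = ((α₀ i).choose (β i) : ℝ) * ∏ j ∈ Finset.univ \ {i}, ((α₀ j).choose (β j) : ℝ) := by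
        rw [← Finset.prod_update_of_mem (Finset.mem_univ i)]
        refine Finset.prod_congr rfl fun j _ => ?_
        rcases eq_or_ne j i with rfl | hj
        · rw [Function.update_self]
        · rw [Function.update_of_ne hj]
      rw [e3]
      have e4 : ((α₀ i).choose (β i) : ℝ) = 1 := by
        rw [hβi, hα₀def, Function.update_self]
        simp
      rw [e4]
      ring
    rw [hu', hv', hc]
    ring

theorem M_submul {M : ℕ → ℝ} (hpos : ∀ j, 0 < M j) (hM0 : M 0 = 1)
    (hlog : ∀ j : ℕ, M (j+1) / M j ≤ M (j+2) / M (j+1)) :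
    ∀ j k, M j * M k ≤ M (j + k) := by
  have hrat : ∀ j k : ℕ, M (j+1) / M j ≤ M (j+k+1) / M (j+k) := by
    intro j k
    induction k with
    | zero => exact le_refl _
    | succ k ih => exact ih.trans (by have := hlog (j + k); rw [show j + (k + 1) + 1 = j + k + 2 by omega, show j + (k + 1) = j + k + 1 by omega]; exact this)
  intro j k
  induction j with
  | zero => rw [hM0, one_mul, zero_add]
  | succ j ih =>
    have h1 : M (j+1) * M k = (M (j+1) / M j) * (M j * M k) := by
      rw [div_mul_eq_mul_div, mul_comm (M j) (M k), ← mul_assoc,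
        mul_div_assoc, div_self (hpos j).ne', mul_one]
    have h2 : (M (j+1) / M j) * (M j * M k) ≤ (M (j+1) / M j) * M (j + k) :=
      mul_le_mul_of_nonneg_left ih (le_of_lt (div_pos (hpos _) (hpos _)))
    have h3 : (M (j+1) / M j) * M (j + k) ≤ (M (j+k+1) / M (j+k)) * M (j + k) := by
      apply mul_le_mul_of_nonneg_right (hrat j k)
      exact (hpos _).le
    have h4 : (M (j+k+1) / M (j+k)) * M (j + k) = M (j + 1 + k) := by
      rw [div_mul_cancel₀]
      · congr 1; omega
      · exact (hpos _).ne'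
    linarith
theorem geom_le_two {t : ℝ} (h0 : 0 ≤ t) (h2 : t ≤ 1/2) :
    ∀ m : ℕ, ∑ l ∈ Finset.range m, t ^ l ≤ 2 := by
  intro m
  induction m with
  | zero => simp
  | succ m ih =>
    rw [Finset.sum_range_succ' (fun l => t ^ l) m]
    have : ∑ l ∈ Finset.range m, t ^ (l + 1) = t * ∑ l ∈ Finset.range m, t ^ l := by
      rw [Finset.mul_sum]
      exact Finset.sum_congr rfl fun l _ => by ring
    rw [this]
    have ht : t * ∑ l ∈ Finset.range m, t ^ l ≤ (1/2) * 2 := by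
      apply mul_le_mul h2 ih (by positivity) (by norm_num)
    simp only [pow_zero]
    linarith

theorem geom_le {t : ℝ} (h0 : 0 ≤ t) (h2 : t ≤ 1/2) (m : ℕ) :
    ∑ l ∈ Finset.range (m + 1), t ^ l ≤ 1 + 2 * t := by
  rw [Finset.sum_range_succ' (fun l => t ^ l) m]
  have : ∑ l ∈ Finset.range m, t ^ (l + 1) = t * ∑ l ∈ Finset.range m, t ^ l := by
    rw [Finset.mul_sum]
    exact Finset.sum_congr rfl fun l _ => by ring
  rw [this]
  have ht : t * ∑ l ∈ Finset.range m, t ^ l ≤ t * 2 :=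
    mul_le_mul_of_nonneg_left (geom_le_two h0 h2 m) h0
  simp only [pow_zero]
  linarith

theorem bern {s : ℝ} (h0 : 0 ≤ s) (h1 : s ≤ 1) :
    ∀ n : ℕ, (1 + s) ^ n ≤ 1 + ((2:ℝ) ^ n - 1) * s := by
  intro n
  induction n with
  | zero => simp
  | succ n ih =>
    have hp : (0:ℝ) ≤ (2:ℝ) ^ n - 1 := by
      have : (1:ℝ) ≤ 2 ^ n := one_le_pow₀ (by norm_num)
      linarith
    have hs2 : s * s ≤ s := by nlinarith
    calc (1 + s) ^ (n+1) = (1 + s) ^ n * (1 + s) := by ring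
    _ ≤ (1 + ((2:ℝ) ^ n - 1) * s) * (1 + s) := by
        apply mul_le_mul_of_nonneg_right ih (by linarith)
    _ = 1 + (2 ^ n - 1 + 1) * s + (2 ^ n - 1) * (s * s) := by ring
    _ ≤ 1 + (2 ^ n - 1 + 1) * s + (2 ^ n - 1) * s := by nlinarith
    _ = 1 + ((2:ℝ) ^ (n+1) - 1) * s := by ring

end Stmt9Aux

open Stmt9Aux in
set_option maxHeartbeats 1000000 in
theorem stmt9' {N : ℕ} (M : ℕ → ℝ)
    (hpos : ∀ j, 0 < M j) (hmono : Monotone M) (hM0 : M 0 = 1)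
    (hlog : ∀ j : ℕ, M (j+1) / M j ≤ M (j+2) / M (j+1))
    (U : Set (EuclideanSpace ℝ (Fin N))) (hUopen : IsOpen U)
    (f : EuclideanSpace ℝ (Fin N) → ℝ) (hf : CRM M U f)
    (hne : ∀ x ∈ U, f x ≠ 0) :
    CRM M U (fun x => 1 / f x) := by
  classical
  have hMsub := M_submul hpos hM0 hlog
  have hg : ContDiffOn ℝ (⊤ : ℕ∞) (fun x => 1 / f x) U := by
    simp only [one_div]
    exact hf.1.inv hne
  refine ⟨hg, fun K hKU hKc => ?_⟩
  obtain ⟨A, B, hA, hB, hAB⟩ := hf.2 K hKU hKc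
  -- bound on 1/f on K
  have hcont : ContinuousOn (fun x => 1 / f x) K :=
    continuousOn_const.div ((hf.1.continuousOn).mono hKU) (fun x hx => hne x (hKU hx))
  obtain ⟨C, hC⟩ := hKc.exists_bound_of_continuousOn hcont
  set C0 : ℝ := max C 1 with hC0def
  have hC0one : (1 : ℝ) ≤ C0 := le_max_right _ _
  have hC0pos : (0 : ℝ) < C0 := lt_of_lt_of_le one_pos hC0one
  have hC0 : ∀ x ∈ K, |1 / f x| ≤ C0 := fun x hx =>
    (Real.norm_eq_abs _ ▸ hC x hx).trans (le_max_left _ _)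
  set B₁ : ℝ := B * max A 1 with hB₁def
  have hB₁pos : 0 < B₁ := mul_pos hB (lt_of_lt_of_le one_pos (le_max_right _ _))
  have hABm : ∀ m : ℕ, 1 ≤ m → A * B ^ m ≤ B₁ ^ m := by
    intro m hm
    rw [hB₁def, mul_pow]
    have h1 : A ≤ (max A 1) ^ m :=
      (le_max_left A 1).trans (le_self_pow₀ (le_max_right A 1) (by omega))
    calc A * B ^ m ≤ (max A 1) ^ m * B ^ m :=
          mul_le_mul_of_nonneg_right h1 (pow_nonneg hB.le m)
      _ = B ^ m * (max A 1) ^ m := by ring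
  set t : ℝ := min (1/2) (1 / (2 * C0 * 2 ^ N)) with htdef
  have ht0 : 0 < t := lt_min (by norm_num) (by positivity)
  have ht2 : t ≤ 1/2 := min_le_left _ _
  have htC : 2 * C0 * 2 ^ N * t ≤ 1 := by
    have h1 : t ≤ 1 / (2 * C0 * 2 ^ N) := min_le_right _ _
    have h2 : (0:ℝ) < 2 * C0 * 2 ^ N := by positivity
    calc 2 * C0 * 2 ^ N * t ≤ 2 * C0 * 2 ^ N * (1 / (2 * C0 * 2 ^ N)) :=
          mul_le_mul_of_nonneg_left h1 h2.le
      _ = 1 := by field_simp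
  set B' : ℝ := B₁ / t with hB'def
  have hB'pos : 0 < B' := div_pos hB₁pos ht0
  have hB₁t : B₁ = B' * t := (div_mul_cancel₀ B₁ ht0.ne').symm
  have hmFD : ∀ (γ : Fin N → ℕ) (u : EuclideanSpace ℝ (Fin N) → ℝ),
      mderiv γ u = FD Finset.univ.toList γ u := fun _ _ => rfl
  -- the sum of t-powers bound
  have hsumt : ∀ α : Fin N → ℕ,
      ∑ β ∈ (Fintype.piFinset fun j : Fin N => Finset.range (α j + 1)).erase (fun _ => 0),
        t ^ (∑ j, β j) ≤ 2 * t * (2 ^ N - 1) := by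
    intro α
    have hmem : (fun _ => 0 : Fin N → ℕ) ∈ Fintype.piFinset
        (fun j : Fin N => Finset.range (α j + 1)) :=
      Fintype.mem_piFinset.2 fun j => Finset.mem_range.2 (Nat.succ_pos _)
    have hsplit : t ^ (∑ j, (fun _ => 0 : Fin N → ℕ) j)
        + ∑ β ∈ (Fintype.piFinset fun j : Fin N => Finset.range (α j + 1)).erase (fun _ => 0),
            t ^ (∑ j, β j)
        = ∑ β ∈ Fintype.piFinset fun j : Fin N => Finset.range (α j + 1), t ^ (∑ j, β j) :=
      Finset.add_sum_erase _ (fun β : Fin N → ℕ => t ^ (∑ j, β j)) hmem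
    have hfull : ∑ β ∈ Fintype.piFinset (fun j : Fin N => Finset.range (α j + 1)),
        t ^ (∑ j, β j) ≤ (1 + 2 * t) ^ N := by
      have e1 : ∑ β ∈ Fintype.piFinset (fun j : Fin N => Finset.range (α j + 1)),
          t ^ (∑ j, β j)
          = ∏ j : Fin N, ∑ m ∈ Finset.range (α j + 1), t ^ m := by
        rw [Finset.prod_univ_sum]
        exact Finset.sum_congr rfl fun β _ =>
          (Finset.prod_pow_eq_pow_sum Finset.univ β t).symm |>.symm ▸ rfl
      rw [e1]
      have e2 : (1 + 2*t) ^ N = ∏ _j : Fin N, (1 + 2*t) := by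
        rw [Finset.prod_const, Finset.card_univ, Fintype.card_fin]
      rw [e2]
      refine Finset.prod_le_prod (fun j _ => ?_) (fun j _ => geom_le ht0.le ht2 (α j))
      exact Finset.sum_nonneg fun m _ => pow_nonneg ht0.le m
    have hbern : (1 + 2*t) ^ N ≤ 1 + ((2:ℝ) ^ N - 1) * (2*t) :=
      bern (by linarith) (by linarith) N
    have h0 : t ^ (∑ j, (fun _ => 0 : Fin N → ℕ) j) = 1 := by
      simp
    rw [h0] at hsplit
    linarith
  refine ⟨C0, B', hC0pos, hB'pos, fun x hxK α => ?_⟩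
  -- main strong induction
  suffices main : ∀ n : ℕ, ∀ α : Fin N → ℕ, (∑ i, α i) = n → ∀ x ∈ K,
      (1 / (∏ i, ((α i).factorial : ℝ))) * |mderiv α (fun x => 1 / f x) x|
        ≤ C0 * B' ^ n * M n by
    exact main (∑ i, α i) α rfl x hxK
  intro n
  induction n using Nat.strong_induction_on with
  | _ n IH =>
    intro α hn x hxK
    have hxU : x ∈ U := hKU hxK
    by_cases h0 : ∀ i, α i = 0
    · have hn0 : n = 0 := by
        rw [← hn]
        exact Finset.sum_eq_zero fun i _ => h0 i
      subst hn0
      have hfd : mderiv α (fun x => 1 / f x) = fun x => 1 / f x := by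
        rw [hmFD]
        exact FD_allzero _ fun i _ => h0 i
      have hfac : (∏ i, ((α i).factorial : ℝ)) = 1 :=
        Finset.prod_eq_one fun i _ => by rw [h0 i]; norm_num
      rw [hfd, hfac, pow_zero, hM0]
      simpa using hC0 x hxK
    · push_neg at h0
      obtain ⟨i₀, hi₀⟩ := h0
      -- Leibniz identity and vanishing of the derivative of f * (1/f)
      have hleib := FD_mul hUopen hf.1 hg Finset.univ.toList (Finset.nodup_toList _) α
        (fun i hi => absurd (Finset.mem_toList.2 (Finset.mem_univ i)) hi) x hxU
      have hzero : FD Finset.univ.toList α (fun y => f y * (1 / f y)) x = 0 := by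
        have h1 := FD_congr hUopen (u := fun y => f y * (1 / f y)) (v := fun _ => (1:ℝ))
          (fun y hy => mul_one_div_cancel (hne y hy)) Finset.univ.toList α x hxU
        rw [h1, FD_const_of_exists ⟨i₀, Finset.mem_toList.2 (Finset.mem_univ i₀), hi₀⟩ 1]
      have hsum0 : ∑ β ∈ Fintype.piFinset (fun j : Fin N => Finset.range (α j + 1)),
          (∏ j, ((α j).choose (β j) : ℝ)) *
            (FD Finset.univ.toList β f x *
              FD Finset.univ.toList (fun j => α j - β j) (fun x => 1 / f x) x) = 0 :=
        hleib.symm.trans hzero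
      have hmem : (fun _ => 0 : Fin N → ℕ) ∈ Fintype.piFinset
          (fun j : Fin N => Finset.range (α j + 1)) :=
        Fintype.mem_piFinset.2 fun j => Finset.mem_range.2 (Nat.succ_pos _)
      have hsplit := Finset.add_sum_erase _ (fun β : Fin N → ℕ =>
        (∏ j, ((α j).choose (β j) : ℝ)) *
          (FD Finset.univ.toList β f x *
            FD Finset.univ.toList (fun j => α j - β j) (fun x => 1 / f x) x)) hmem
      have hFβ₀ : (∏ j, ((α j).choose ((fun _ => 0 : Fin N → ℕ) j) : ℝ)) *
          (FD Finset.univ.toList (fun _ => 0 : Fin N → ℕ) f x *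
            FD Finset.univ.toList (fun j => α j - (fun _ => 0 : Fin N → ℕ) j) (fun x => 1 / f x) x)
          = f x * FD Finset.univ.toList α (fun x => 1 / f x) x := by
        have h1 : FD Finset.univ.toList (fun _ => 0 : Fin N → ℕ) f = f :=
          FD_allzero _ fun _ _ => rfl
        have h2 : FD Finset.univ.toList (fun j => α j - (fun _ => 0 : Fin N → ℕ) j)
            (fun x => 1 / f x) = FD Finset.univ.toList α (fun x => 1 / f x) :=
          FD_index_congr _ fun j _ => rfl
        rw [h1, h2]
        simp
      have hkey : f x * FD Finset.univ.toList α (fun x => 1 / f x) x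
          = - ∑ β ∈ (Fintype.piFinset fun j : Fin N => Finset.range (α j + 1)).erase
              (fun _ => 0),
            (∏ j, ((α j).choose (β j) : ℝ)) *
              (FD Finset.univ.toList β f x *
                FD Finset.univ.toList (fun j => α j - β j) (fun x => 1 / f x) x) := by
        rw [← hFβ₀]
        linarith [hsplit, hsum0]
      -- absolute value bound
      have hfx : f x ≠ 0 := hne x hxU
      have habs : |FD Finset.univ.toList α (fun x => 1 / f x) x|
          ≤ C0 * ∑ β ∈ (Fintype.piFinset fun j : Fin N => Finset.range (α j + 1)).erase
              (fun _ => 0),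
            |(∏ j, ((α j).choose (β j) : ℝ)) *
              (FD Finset.univ.toList β f x *
                FD Finset.univ.toList (fun j => α j - β j) (fun x => 1 / f x) x)| := by
        have h1 : FD Finset.univ.toList α (fun x => 1 / f x) x
            = (1 / f x) * - ∑ β ∈ (Fintype.piFinset fun j : Fin N =>
                Finset.range (α j + 1)).erase (fun _ => 0),
              (∏ j, ((α j).choose (β j) : ℝ)) *
                (FD Finset.univ.toList β f x *
                  FD Finset.univ.toList (fun j => α j - β j) (fun x => 1 / f x) x) := by
          rw [← hkey]
          field_simp
        rw [h1, abs_mul, abs_neg]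
        calc |1 / f x| * |∑ β ∈ _, _| ≤ C0 * |∑ β ∈ (Fintype.piFinset fun j : Fin N =>
                Finset.range (α j + 1)).erase (fun _ => 0),
              (∏ j, ((α j).choose (β j) : ℝ)) *
                (FD Finset.univ.toList β f x *
                  FD Finset.univ.toList (fun j => α j - β j) (fun x => 1 / f x) x)| :=
              mul_le_mul_of_nonneg_right (hC0 x hxK) (abs_nonneg _)
          _ ≤ C0 * ∑ β ∈ (Fintype.piFinset fun j : Fin N =>
                Finset.range (α j + 1)).erase (fun _ => 0),
              |(∏ j, ((α j).choose (β j) : ℝ)) *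
                (FD Finset.univ.toList β f x *
                  FD Finset.univ.toList (fun j => α j - β j) (fun x => 1 / f x) x)| :=
              mul_le_mul_of_nonneg_left (Finset.abs_sum_le_sum_abs _ _) hC0pos.le
      -- per-term bound
      have hterm : ∀ β ∈ (Fintype.piFinset fun j : Fin N =>
            Finset.range (α j + 1)).erase (fun _ => 0),
          (1 / (∏ i, ((α i).factorial : ℝ))) *
            |(∏ j, ((α j).choose (β j) : ℝ)) *
              (FD Finset.univ.toList β f x *
                FD Finset.univ.toList (fun j => α j - β j) (fun x => 1 / f x) x)|
          ≤ t ^ (∑ j, β j) * (C0 * B' ^ n * M n) := by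
        intro β hβ
        have hβP := Finset.mem_of_mem_erase hβ
        have hβne : β ≠ (fun _ => 0) := Finset.ne_of_mem_erase hβ
        have hβle : ∀ j, β j ≤ α j := fun j => by
          have := Fintype.mem_piFinset.1 hβP j
          rw [Finset.mem_range] at this
          omega
        have hb1 : 1 ≤ ∑ j, β j := by
          by_contra hcon
          push_neg at hcon
          have hz : ∀ j, β j = 0 := by
            intro j
            have := Finset.sum_eq_zero_iff.1 (by omega : (∑ j, β j) = 0) j (Finset.mem_univ j)
            exact this
          exact hβne (funext hz)
        have hbn : (∑ j, β j) ≤ n := by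
          rw [← hn]
          exact Finset.sum_le_sum fun j _ => hβle j
        have hsub : (∑ j, (α j - β j)) = n - (∑ j, β j) := by
          have h1 : (∑ j, (α j - β j)) + (∑ j, β j) = n := by
            rw [← Finset.sum_add_distrib, ← hn]
            exact Finset.sum_congr rfl fun j _ => Nat.sub_add_cancel (hβle j)
          omega
        have hlt : n - (∑ j, β j) < n := by omega
        have hIHb := IH (n - (∑ j, β j)) hlt (fun j => α j - β j) hsub x hxK
        have hfb := hAB x hxK β
        -- factorial identity
        have hfact : (∏ j, ((α j).choose (β j) : ℝ)) *
            ((∏ j, ((β j).factorial : ℝ)) * (∏ j, (((α j - β j)).factorial : ℝ)))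
            = ∏ j, ((α j).factorial : ℝ) := by
          rw [← Finset.prod_mul_distrib, ← Finset.prod_mul_distrib]
          refine Finset.prod_congr rfl fun j _ => ?_
          have hnat := Nat.choose_mul_factorial_mul_factorial (hβle j)
          have hcast := congrArg (fun z : ℕ => (z : ℝ)) hnat
          push_cast at hcast
          rw [← hcast]
          ring
        have hfacpos : (0:ℝ) < ∏ j, ((α j).factorial : ℝ) :=
          Finset.prod_pos fun j _ => by positivity
        have hfacposβ : (0:ℝ) < ∏ j, ((β j).factorial : ℝ) :=
          Finset.prod_pos fun j _ => by positivity
        have hfacposαβ : (0:ℝ) < ∏ j, (((α j - β j)).factorial : ℝ) :=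
          Finset.prod_pos fun j _ => by positivity
        have hchoosepos : (0:ℝ) ≤ ∏ j, ((α j).choose (β j) : ℝ) :=
          Finset.prod_nonneg fun j _ => by positivity
        -- rewrite the term
        have hsplit2 : (1 / (∏ i, ((α i).factorial : ℝ))) *
            |(∏ j, ((α j).choose (β j) : ℝ)) *
              (FD Finset.univ.toList β f x *
                FD Finset.univ.toList (fun j => α j - β j) (fun x => 1 / f x) x)|
            = ((1 / (∏ j, ((β j).factorial : ℝ))) * |FD Finset.univ.toList β f x|) *
              ((1 / (∏ j, (((α j - β j)).factorial : ℝ))) *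
                |FD Finset.univ.toList (fun j => α j - β j) (fun x => 1 / f x) x|) := by
          rw [abs_mul, abs_mul, abs_of_nonneg hchoosepos, ← hfact]
          have hc1 : (∏ j, ((α j).choose (β j) : ℝ)) ≠ 0 :=
            (Finset.prod_pos fun j _ => Nat.cast_pos.2 (Nat.choose_pos (hβle j))).ne'
          set a := |FD Finset.univ.toList β f x| with ha
          set b := |FD Finset.univ.toList (fun j => α j - β j) (fun x => 1 / f x) x| with hb2
          set c := ∏ j, ((α j).choose (β j) : ℝ) with hc2
          set dβ := ∏ j, ((β j).factorial : ℝ) with hd1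
          set dαβ := ∏ j, (((α j - β j)).factorial : ℝ) with hd2
          field_simp
        rw [hsplit2]
        -- apply the two bounds
        have h1 : ((1 / (∏ j, ((β j).factorial : ℝ))) * |FD Finset.univ.toList β f x|)
            ≤ A * B ^ (∑ j, β j) * M (∑ j, β j) := by
          rw [← hmFD]
          exact hfb
        have h2 : ((1 / (∏ j, (((α j - β j)).factorial : ℝ))) *
              |FD Finset.univ.toList (fun j => α j - β j) (fun x => 1 / f x) x|)
            ≤ C0 * B' ^ (n - (∑ j, β j)) * M (n - (∑ j, β j)) := by
          rw [← hmFD]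
          exact hIHb
        have hnn1 : (0:ℝ) ≤ (1 / (∏ j, ((β j).factorial : ℝ))) *
            |FD Finset.univ.toList β f x| := by positivity
        have hnn2 : (0:ℝ) ≤ (1 / (∏ j, (((α j - β j)).factorial : ℝ))) *
            |FD Finset.univ.toList (fun j => α j - β j) (fun x => 1 / f x) x| := by positivity
        have hnnr : (0:ℝ) ≤ C0 * B' ^ (n - (∑ j, β j)) * M (n - (∑ j, β j)) :=
          mul_nonneg (mul_nonneg hC0pos.le (pow_nonneg hB'pos.le _)) (hpos _).le
        have hmm : ((1 / (∏ j, ((β j).factorial : ℝ))) * |FD Finset.univ.toList β f x|) *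
            ((1 / (∏ j, (((α j - β j)).factorial : ℝ))) *
              |FD Finset.univ.toList (fun j => α j - β j) (fun x => 1 / f x) x|)
            ≤ (A * B ^ (∑ j, β j) * M (∑ j, β j)) *
              (C0 * B' ^ (n - (∑ j, β j)) * M (n - (∑ j, β j))) :=
          mul_le_mul h1 h2 hnn2
            (mul_nonneg (mul_nonneg hA.le (pow_nonneg hB.le _)) (hpos _).le)
        refine hmm.trans ?_
        -- final algebra
        have hAB1 : A * B ^ (∑ j, β j) ≤ B₁ ^ (∑ j, β j) := hABm _ hb1
        have hM2 : M (∑ j, β j) * M (n - (∑ j, β j)) ≤ M n := by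
          have := hMsub (∑ j, β j) (n - (∑ j, β j))
          rwa [Nat.add_sub_cancel' hbn] at this
        have hB3 : B₁ ^ (∑ j, β j) = t ^ (∑ j, β j) * B' ^ (∑ j, β j) := by
          rw [hB₁t, mul_pow]
          ring
        have hB4 : B' ^ (∑ j, β j) * B' ^ (n - (∑ j, β j)) = B' ^ n := by
          rw [← pow_add]
          congr 1
          omega
        calc (A * B ^ (∑ j, β j) * M (∑ j, β j)) *
              (C0 * B' ^ (n - (∑ j, β j)) * M (n - (∑ j, β j)))
            = (A * B ^ (∑ j, β j)) * (M (∑ j, β j) * M (n - (∑ j, β j)))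
                * (C0 * B' ^ (n - (∑ j, β j))) := by ring
          _ ≤ (B₁ ^ (∑ j, β j)) * (M n) * (C0 * B' ^ (n - (∑ j, β j))) := by
              have hx1 : (0:ℝ) ≤ M (∑ j, β j) * M (n - (∑ j, β j)) :=
                mul_nonneg (hpos _).le (hpos _).le
              have hx2 : (0:ℝ) ≤ C0 * B' ^ (n - (∑ j, β j)) := by positivity
              have hx3 : (0:ℝ) ≤ B₁ ^ (∑ j, β j) := by positivity
              apply mul_le_mul_of_nonneg_right _ hx2
              exact mul_le_mul hAB1 hM2 hx1 hx3
          _ = t ^ (∑ j, β j) * (C0 * (B' ^ (∑ j, β j) * B' ^ (n - (∑ j, β j))) * M n) := by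
              rw [hB3]
              ring
          _ = t ^ (∑ j, β j) * (C0 * B' ^ n * M n) := by rw [hB4]
      -- combine everything
      have hfacnn : (0:ℝ) ≤ 1 / (∏ i, ((α i).factorial : ℝ)) := by
        have : (0:ℝ) < ∏ i, ((α i).factorial : ℝ) :=
          Finset.prod_pos fun j _ => by positivity
        positivity
      rw [hmFD]
      calc (1 / (∏ i, ((α i).factorial : ℝ))) *
            |FD Finset.univ.toList α (fun x => 1 / f x) x|
          ≤ (1 / (∏ i, ((α i).factorial : ℝ))) *
            (C0 * ∑ β ∈ (Fintype.piFinset fun j : Fin N =>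
                Finset.range (α j + 1)).erase (fun _ => 0),
              |(∏ j, ((α j).choose (β j) : ℝ)) *
                (FD Finset.univ.toList β f x *
                  FD Finset.univ.toList (fun j => α j - β j) (fun x => 1 / f x) x)|) :=
            mul_le_mul_of_nonneg_left habs hfacnn
        _ = C0 * ∑ β ∈ (Fintype.piFinset fun j : Fin N =>
                Finset.range (α j + 1)).erase (fun _ => 0),
              (1 / (∏ i, ((α i).factorial : ℝ))) *
              |(∏ j, ((α j).choose (β j) : ℝ)) *
                (FD Finset.univ.toList β f x *
                  FD Finset.univ.toList (fun j => α j - β j) (fun x => 1 / f x) x)| := by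
            rw [Finset.mul_sum, Finset.mul_sum, Finset.mul_sum]
            exact Finset.sum_congr rfl fun β _ => by ring
        _ ≤ C0 * ∑ β ∈ (Fintype.piFinset fun j : Fin N =>
                Finset.range (α j + 1)).erase (fun _ => 0),
              t ^ (∑ j, β j) * (C0 * B' ^ n * M n) := by
            apply mul_le_mul_of_nonneg_left _ hC0pos.le
            exact Finset.sum_le_sum hterm
        _ = (C0 * (C0 * B' ^ n * M n)) * ∑ β ∈ (Fintype.piFinset fun j : Fin N =>
                Finset.range (α j + 1)).erase (fun _ => 0), t ^ (∑ j, β j) := by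
            rw [← Finset.sum_mul]
            ring
        _ ≤ (C0 * (C0 * B' ^ n * M n)) * (2 * t * (2 ^ N - 1)) := by
            apply mul_le_mul_of_nonneg_left (hsumt α)
            exact mul_nonneg hC0pos.le
              (mul_nonneg (mul_nonneg hC0pos.le (pow_nonneg hB'pos.le _)) (hpos _).le)
        _ ≤ C0 * B' ^ n * M n := by
            have hfac2 : C0 * (2 * t * (2 ^ N - 1)) ≤ 1 := by
              have h2N : (1:ℝ) ≤ 2 ^ N := one_le_pow₀ (by norm_num)
              nlinarith [htC, hC0pos, ht0]
            have hnnB : (0:ℝ) ≤ C0 * B' ^ n * M n :=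
              mul_nonneg (mul_nonneg hC0pos.le (pow_nonneg hB'pos.le _)) (hpos _).le
            nlinarith [hfac2, hnnB, hC0pos, ht0]

/-- `C^ℝ_M(U)` is closed under reciprocal. -/
theorem stmt9 {N : ℕ} (M : ℕ → ℝ)
    (hpos : ∀ j, 0 < M j) (hmono : Monotone M) (hM0 : M 0 = 1)
    (hlog : ∀ j : ℕ, M (j+1) / M j ≤ M (j+2) / M (j+1))
    (hgrow : Filter.Tendsto (fun j : ℕ => M j ^ ((1 : ℝ) / j)) Filter.atTop Filter.atTop)
    (hder : ∃ C : ℝ, ∀ j : ℕ, 1 ≤ j → (M (j+1) / M j) ^ ((1 : ℝ) / j) ≤ C)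
    (U : Set (EuclideanSpace ℝ (Fin N))) (hUopen : IsOpen U)
    (f : EuclideanSpace ℝ (Fin N) → ℝ) (hf : CRM M U f)
    (hne : ∀ x ∈ U, f x ≠ 0) :
    CRM M U (fun x => 1 / f x) :=
  stmt9' M hpos hmono hM0 hlog U hUopen f hf hne
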